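/- arXiv:2301.10647 — 2 statements merged into one kernel-verified Lean document; each statement's English description precedes it below -/
import Mathlib

section
/- Let N ≥ 1, K ≥ 1, and let α_1, …, α_K be distinct real numbers such that the K(K+1)/2 products α_i·α_j for 1 ≤ i ≤ j ≤ K are linearly independent over ℚ. For signals x, x' ∈ {α_1, …, α_K}^N, with level sets A_k(x) = {n : x[n] = α_k} and A_k(x') = {n : x'[n] = α_k}, the autocorrelations satisfy a_x = a_{x'} if and only if the ordered partitions (A_1(x), …, A_K(x)) and (A_1(x'), …, A_K(x')) of [0,N-1] are homometric. -/
/-- The cyclic distance `d(i,j) = min(|i-j|, N-|i-j|)` on `ZMod N`. -/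
def cdist {N : ℕ} (i j : ZMod N) : ℕ := min (i - j).val (j - i).val

/-- The cyclic difference multiset `A - B = {d(i,j) : i ∈ A, j ∈ B}`. -/
def diffMS {N : ℕ} (A B : Finset (ZMod N)) : Multiset ℕ :=
  (A ×ˢ B).val.map fun p => cdist p.1 p.2

/-- The self difference multiset `A - A = {d(i,j) : i ≤ j ∈ A}`. -/
def selfDiffMS {N : ℕ} (A : Finset (ZMod N)) : Multiset ℕ :=
  ((A ×ˢ A).filter fun p => p.1.val ≤ p.2.val).val.map fun p => cdist p.1 p.2

/-- Two subsets are homometric if they have the same self difference multiset. -/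
def Homometric {N : ℕ} (A B : Finset (ZMod N)) : Prop :=
  selfDiffMS A = selfDiffMS B

/-- `σ : ZMod N → ZMod N` is given by the action of an element of the dihedral
group `D_{2N}`, generated by the rotation `i ↦ i + 1` and the reflection `i ↦ -i`. -/
def IsDihedral {N : ℕ} (σ : ZMod N → ZMod N) : Prop :=
  (∃ k : ZMod N, ∀ i, σ i = i + k) ∨ (∃ k : ZMod N, ∀ i, σ i = -i + k)

/-- Two subsets are equivalent if one is the image of the other under `D_{2N}`. -/
def EquivSets {N : ℕ} (A B : Finset (ZMod N)) : Prop :=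
  ∃ σ : ZMod N → ZMod N, IsDihedral σ ∧ B = A.image σ

/-- An ordered partition of `[0, N-1]`: pairwise disjoint sets covering everything. -/
def IsPartitionOf {N K : ℕ} [NeZero N] (A : Fin K → Finset (ZMod N)) : Prop :=
  (∀ i j, i ≠ j → Disjoint (A i) (A j)) ∧ Finset.univ.biUnion A = Finset.univ

/-- Two ordered partitions are homometric if `A i - A j = B i - B j` for all pairs. -/
def HomometricPart {N K : ℕ} (A B : Fin K → Finset (ZMod N)) : Prop :=
  ∀ i j, diffMS (A i) (A j) = diffMS (B i) (B j)

/-- Two ordered partitions are equivalent if a single dihedral element maps one to the other. -/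
def EquivPart {N K : ℕ} (A B : Fin K → Finset (ZMod N)) : Prop :=
  ∃ σ : ZMod N → ZMod N, IsDihedral σ ∧ ∀ i, B i = (A i).image σ

/-- Two ordered partitions are pseudo-equivalent if each part is mapped by some
(possibly different) dihedral element. -/
def PseudoEquivPart {N K : ℕ} (A B : Fin K → Finset (ZMod N)) : Prop :=
  ∀ i, ∃ σ : ZMod N → ZMod N, IsDihedral σ ∧ B i = (A i).image σ

/-- The periodic autocorrelation `a_x[ℓ] = ∑ x[n] x[n+ℓ]`. -/
noncomputable def autocorr {N : ℕ} [NeZero N] (x : ZMod N → ℝ) (ℓ : ZMod N) : ℝ :=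
  ∑ n : ZMod N, x n * x (n + ℓ)

open Classical in
/-- The level set `{i : x[i] = a}` of a signal. -/
noncomputable def levelSet {N : ℕ} [NeZero N] (x : ZMod N → ℝ) (a : ℝ) : Finset (ZMod N) :=
  Finset.univ.filter fun i => x i = a

section Aux
open Finset
open scoped Classical

open Finset
open scoped Classical

variable {N : ℕ} [NeZero N] {K : ℕ}

/-- symmetric distance of a lag -/
def mdist {N : ℕ} (ℓ : ZMod N) : ℕ := min ℓ.val (-ℓ).val

lemma mdist_neg (ℓ : ZMod N) : mdist (-ℓ) = mdist ℓ := by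
  simp [mdist, min_comm]

lemma cdist_eq (i j : ZMod N) : cdist i j = mdist (j - i) := by
  simp [cdist, mdist, neg_sub, min_comm]

lemma mdist_eq_iff (m ℓ : ZMod N) : mdist m = mdist ℓ ↔ m = ℓ ∨ m = -ℓ := by
  constructor
  · intro h
    unfold mdist at h
    rcases min_cases m.val (-m).val with ⟨h1, -⟩ | ⟨h1, -⟩ <;>
      rcases min_cases ℓ.val (-ℓ).val with ⟨h2, -⟩ | ⟨h2, -⟩ <;>
      rw [h1, h2] at h
    · exact Or.inl (ZMod.val_injective N h)
    · exact Or.inr (ZMod.val_injective N h)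
    · exact Or.inr (neg_eq_iff_eq_neg.mp (ZMod.val_injective N h))
    · exact Or.inl (neg_injective (ZMod.val_injective N h))
  · rintro (rfl | rfl)
    · rfl
    · exact mdist_neg ℓ

noncomputable def cnt {N : ℕ} [NeZero N] (x : ZMod N → ℝ) (a b : ℝ) (ℓ : ZMod N) : ℕ :=
  (Finset.univ.filter fun n => x n = a ∧ x (n + ℓ) = b).card

lemma cnt_neg (x : ZMod N → ℝ) (a b : ℝ) (ℓ : ZMod N) :
    cnt x b a ℓ = cnt x a b (-ℓ) := by
  unfold cnt
  apply Finset.card_nbij' (fun n => n + ℓ) (fun m => m - ℓ)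
  · intro n hn
    simp only [mem_coe, mem_filter, mem_univ, true_and] at hn ⊢
    constructor
    · exact hn.2
    · simpa using hn.1
  · intro m hm
    simp only [mem_coe, mem_filter, mem_univ, true_and] at hm ⊢
    constructor
    · simpa [sub_eq_add_neg] using hm.2
    · simpa using hm.1
  · intro n _; simp
  · intro m _; simp


lemma fiber_card (x : ZMod N → ℝ) (a b : ℝ) (ℓ : ZMod N) :
    (((levelSet x a) ×ˢ (levelSet x b)).filter fun p => p.2 - p.1 = ℓ).card
      = cnt x a b ℓ := by
  unfold cnt levelSet
  apply Finset.card_nbij' (fun p => p.1) (fun n => (n, n + ℓ))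
  · intro p hp
    simp only [mem_coe, mem_filter, mem_product, mem_univ, true_and] at hp ⊢
    obtain ⟨⟨h1, h2⟩, h3⟩ := hp
    refine ⟨h1, ?_⟩
    rw [show p.1 + ℓ = p.2 by rw [← h3]; ring]
    exact h2
  · intro n hn
    simp only [mem_coe, mem_filter, mem_product, mem_univ, true_and] at hn ⊢
    exact ⟨⟨hn.1, hn.2⟩, by ring⟩
  · intro p hp
    simp only [mem_coe, mem_filter] at hp
    have h3 : p.1 + ℓ = p.2 := by rw [← hp.2]; ring
    exact Prod.ext rfl h3
  · intro n _; rfl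

lemma count_diffMS (x : ZMod N → ℝ) (a b : ℝ) (d : ℕ) :
    (diffMS (levelSet x a) (levelSet x b)).count d
      = ∑ m : ZMod N, if mdist m = d then cnt x a b m else 0 := by
  classical
  set A := levelSet x a
  set B := levelSet x b
  rw [diffMS, Multiset.count_map]
  have h1 : ((A ×ˢ B).val.filter fun p => d = cdist p.1 p.2).card
      = ((A ×ˢ B).filter fun p => d = cdist p.1 p.2).card := rfl
  rw [h1]
  rw [Finset.card_eq_sum_card_fiberwise
    (f := fun p : ZMod N × ZMod N => p.2 - p.1) (t := Finset.univ) (fun p _ => mem_univ _)]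
  apply Finset.sum_congr rfl
  intro m _
  rw [Finset.filter_filter]
  by_cases hm : mdist m = d
  · rw [if_pos hm, ← fiber_card x a b m]
    congr 1
    apply Finset.filter_congr
    intro p hp
    simp only [cdist_eq]
    constructor
    · rintro ⟨-, h⟩; exact h
    · intro h; exact ⟨by rw [h, hm], h⟩
  · rw [if_neg hm]
    rw [Finset.filter_false_of_mem, Finset.card_empty]
    rintro p hp ⟨h2, h3⟩
    apply hm
    rw [← h3, ← cdist_eq]
    exact h2.symm

lemma double_fiber (c : ZMod N → ℕ) (d : ℕ) :
    2 * ∑ m : ZMod N, (if mdist m = d then c m else 0)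
      = ∑ m : ZMod N, (if mdist m = d then c m + c (-m) else 0) := by
  have h1 : ∑ m : ZMod N, (if mdist m = d then c m else 0)
      = ∑ m : ZMod N, (if mdist m = d then c (-m) else 0) :=
    Fintype.sum_equiv (Equiv.neg _) _ _ (fun m => by simp [mdist_neg])
  rw [two_mul]
  nth_rewrite 2 [h1]
  rw [← Finset.sum_add_distrib]
  apply Finset.sum_congr rfl
  intro m _
  split_ifs <;> simp

lemma T_eq (c : ZMod N → ℕ) (ℓ : ZMod N) :
    ∑ m : ZMod N, (if mdist m = mdist ℓ then c m else 0)
      = if ℓ = -ℓ then c ℓ else c ℓ + c (-ℓ) := by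
  rw [← Finset.sum_filter]
  have hf : Finset.univ.filter (fun m : ZMod N => mdist m = mdist ℓ) = insert ℓ {-ℓ} := by
    ext m
    simp [mdist_eq_iff]
  rw [hf]
  by_cases h : ℓ = -ℓ
  · rw [if_pos h, ← h]
    simp
  · rw [if_neg h, Finset.sum_insert (by simpa using h), Finset.sum_singleton]


lemma autocorr_neg (x : ZMod N → ℝ) (ℓ : ZMod N) : autocorr x (-ℓ) = autocorr x ℓ := by
  unfold autocorr
  apply Fintype.sum_equiv (Equiv.addRight (-ℓ))
  intro m
  simp only [Equiv.coe_addRight]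
  rw [add_assoc, neg_add_cancel, add_zero, mul_comm]

lemma sum_ite_prod (α : Fin K → ℝ) (hdist : Function.Injective α) (v w : ℝ)
    (hv : ∃ k, v = α k) (hw : ∃ k, w = α k) :
    ∑ i : Fin K, ∑ j : Fin K, (if v = α i ∧ w = α j then α i * α j else 0) = v * w := by
  obtain ⟨k, rfl⟩ := hv
  obtain ⟨k', rfl⟩ := hw
  simp [hdist.eq_iff, ite_and, Finset.sum_ite_eq]

lemma autocorr_eq (α : Fin K → ℝ) (hdist : Function.Injective α) (x : ZMod N → ℝ)
    (hx : ∀ n, ∃ k, x n = α k) (ℓ : ZMod N) :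
    autocorr x ℓ = ∑ i : Fin K, ∑ j : Fin K, (cnt x (α i) (α j) ℓ : ℝ) * (α i * α j) := by
  have step : ∀ i j : Fin K, (cnt x (α i) (α j) ℓ : ℝ) * (α i * α j)
      = ∑ n : ZMod N, if x n = α i ∧ x (n + ℓ) = α j then α i * α j else 0 := by
    intro i j
    rw [← Finset.sum_filter, Finset.sum_const, nsmul_eq_mul, cnt]
  symm
  calc ∑ i : Fin K, ∑ j : Fin K, (cnt x (α i) (α j) ℓ : ℝ) * (α i * α j)
      = ∑ i : Fin K, ∑ j : Fin K, ∑ n : ZMod N,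
          (if x n = α i ∧ x (n + ℓ) = α j then α i * α j else 0) :=
        Finset.sum_congr rfl fun i _ => Finset.sum_congr rfl fun j _ => step i j
    _ = ∑ i : Fin K, ∑ n : ZMod N, ∑ j : Fin K,
          (if x n = α i ∧ x (n + ℓ) = α j then α i * α j else 0) :=
        Finset.sum_congr rfl fun i _ => Finset.sum_comm
    _ = ∑ n : ZMod N, ∑ i : Fin K, ∑ j : Fin K,
          (if x n = α i ∧ x (n + ℓ) = α j then α i * α j else 0) := Finset.sum_comm
    _ = ∑ n : ZMod N, x n * x (n + ℓ) :=
        Finset.sum_congr rfl fun n _ => sum_ite_prod α hdist _ _ (hx n) (hx (n + ℓ))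
    _ = autocorr x ℓ := rfl

lemma lin_key (α : Fin K → ℝ)
    (hgen : LinearIndependent ℚ
      (fun p : {p : Fin K × Fin K // p.1 ≤ p.2} => α p.1.1 * α p.1.2))
    (t : Fin K → Fin K → ℚ) (hsym : ∀ i j, t i j = t j i)
    (hsum : ∑ i : Fin K, ∑ j : Fin K, (t i j : ℝ) * (α i * α j) = 0) :
    ∀ i j, t i j = 0 := by
  have H := Fintype.linearIndependent_iff.mp hgen
    (fun p => (if p.1.1 = p.1.2 then (1 : ℚ) else 2) * t p.1.1 p.1.2)
  have key : ∀ i j : Fin K, i ≤ j → t i j = 0 := by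
    intro i j hij
    have h0 : ∑ p : {p : Fin K × Fin K // p.1 ≤ p.2},
        ((if p.1.1 = p.1.2 then (1 : ℚ) else 2) * t p.1.1 p.1.2) • (α p.1.1 * α p.1.2) = 0 := by
      set F : Fin K × Fin K → ℝ := fun q => (t q.1 q.2 : ℝ) * (α q.1 * α q.2) with hF
      have e1 : ∑ p : {p : Fin K × Fin K // p.1 ≤ p.2},
          ((if p.1.1 = p.1.2 then (1 : ℚ) else 2) * t p.1.1 p.1.2) • (α p.1.1 * α p.1.2)
          = ∑ q ∈ Finset.univ.filter (fun q : Fin K × Fin K => q.1 ≤ q.2),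
              (if q.1 = q.2 then (1 : ℝ) else 2) * F q := by
        have hmem : ∀ q : Fin K × Fin K,
            q ∈ Finset.univ.filter (fun q : Fin K × Fin K => q.1 ≤ q.2) ↔ q.1 ≤ q.2 := by
          intro q; simp
        rw [← Finset.sum_subtype (Finset.univ.filter fun q : Fin K × Fin K => q.1 ≤ q.2)
          hmem
          (fun q : Fin K × Fin K =>
            ((if q.1 = q.2 then (1 : ℚ) else 2) * t q.1 q.2) • (α q.1 * α q.2))]
        apply Finset.sum_congr rfl
        intro q _
        by_cases h : q.1 = q.2 <;> simp [h, hF, Rat.smul_def] <;> push_cast <;> ring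
      have e2 : ∑ q ∈ Finset.univ.filter (fun q : Fin K × Fin K => q.1 ≤ q.2),
            (if q.1 = q.2 then (1 : ℝ) else 2) * F q
          = (∑ q ∈ Finset.univ.filter (fun q : Fin K × Fin K => q.1 ≤ q.2), F q)
            + ∑ q ∈ Finset.univ.filter (fun q : Fin K × Fin K => q.1 < q.2), F q := by
        have hsplit : ∀ q : Fin K × Fin K,
            (if q.1 = q.2 then (1 : ℝ) else 2) * F q = F q + (if ¬ q.1 = q.2 then F q else 0) := by
          intro q; by_cases h : q.1 = q.2 <;> simp [h] <;> ring
        simp_rw [hsplit]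
        rw [Finset.sum_add_distrib]
        congr 1
        rw [← Finset.sum_filter, Finset.filter_filter]
        apply Finset.sum_congr _ (fun _ _ => rfl)
        ext q
        simp [lt_iff_le_and_ne]
      have e3 : ∑ q ∈ Finset.univ.filter (fun q : Fin K × Fin K => q.1 < q.2), F q
          = ∑ q ∈ Finset.univ.filter (fun q : Fin K × Fin K => ¬ q.1 ≤ q.2), F q := by
        apply Finset.sum_nbij' (i := fun q : Fin K × Fin K => q.swap)
          (j := fun q : Fin K × Fin K => q.swap)
        · intro q hq
          simp only [Finset.mem_filter, Finset.mem_univ, true_and] at hq ⊢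
          simpa [Prod.swap, not_le] using hq
        · intro q hq
          simp only [Finset.mem_filter, Finset.mem_univ, true_and] at hq ⊢
          simpa [Prod.swap, not_le] using hq
        · intro q _; simp
        · intro q _; simp
        · intro q _
          simp only [hF, Prod.swap]
          rw [hsym]
          ring
      have e4 : (∑ q ∈ Finset.univ.filter (fun q : Fin K × Fin K => q.1 ≤ q.2), F q)
            + ∑ q ∈ Finset.univ.filter (fun q : Fin K × Fin K => ¬ q.1 ≤ q.2), F q
          = ∑ q : Fin K × Fin K, F q := Finset.sum_filter_add_sum_filter_not _ _ _
      have e5 : ∑ q : Fin K × Fin K, F q = 0 := by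
        rw [Fintype.sum_prod_type]
        exact hsum
      rw [e1, e2, e3, e4, e5]
    have := H h0 ⟨(i, j), hij⟩
    by_cases hd : i = j
    · simpa [hd] using this
    · simp only [hd, if_false] at this
      rcases mul_eq_zero.mp this with h | h
      · norm_num at h
      · exact h
  intro i j
  rcases le_total i j with h | h
  · exact key i j h
  · rw [hsym]; exact key j i h

end Aux

/-- finite-alphabet phase retrieval for a generic alphabet. -/
theorem finite_alphabet_phase_retrieval (N K : ℕ) [NeZero N] (hK : 1 ≤ K)
    (α : Fin K → ℝ) (hdist : Function.Injective α)
    (hgen : LinearIndependent ℚ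
      (fun p : {p : Fin K × Fin K // p.1 ≤ p.2} => α p.1.1 * α p.1.2))
    (x x' : ZMod N → ℝ)
    (hx : ∀ n, ∃ k, x n = α k) (hx' : ∀ n, ∃ k, x' n = α k) :
    autocorr x = autocorr x' ↔
      HomometricPart (fun k => levelSet x (α k)) (fun k => levelSet x' (α k)) := by
  classical
  constructor
  · intro h
    have hS : ∀ (ℓ : ZMod N) (i j : Fin K),
        cnt x (α i) (α j) ℓ + cnt x (α i) (α j) (-ℓ)
          = cnt x' (α i) (α j) ℓ + cnt x' (α i) (α j) (-ℓ) := by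
      intro ℓ
      set t : Fin K → Fin K → ℚ := fun i j =>
        ((cnt x (α i) (α j) ℓ : ℚ) + (cnt x (α i) (α j) (-ℓ) : ℚ))
        - ((cnt x' (α i) (α j) ℓ : ℚ) + (cnt x' (α i) (α j) (-ℓ) : ℚ)) with ht
      have hsym : ∀ i j, t i j = t j i := by
        intro i j
        simp only [ht]
        rw [cnt_neg x (α i) (α j) ℓ, cnt_neg x (α i) (α j) (-ℓ), neg_neg,
          cnt_neg x' (α i) (α j) ℓ, cnt_neg x' (α i) (α j) (-ℓ), neg_neg]
        ring
      have expand : ∀ (y : ZMod N → ℝ), (∀ n, ∃ k, y n = α k) →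
          ∑ i : Fin K, ∑ j : Fin K,
            (((cnt y (α i) (α j) ℓ : ℝ) + (cnt y (α i) (α j) (-ℓ) : ℝ)) * (α i * α j))
            = autocorr y ℓ + autocorr y (-ℓ) := by
        intro y hy
        rw [autocorr_eq α hdist y hy ℓ, autocorr_eq α hdist y hy (-ℓ),
          ← Finset.sum_add_distrib]
        refine Finset.sum_congr rfl fun i _ => ?_
        rw [← Finset.sum_add_distrib]
        refine Finset.sum_congr rfl fun j _ => by ring
      have hsum : ∑ i : Fin K, ∑ j : Fin K, (t i j : ℝ) * (α i * α j) = 0 := by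
        have hrw : ∀ i j : Fin K, (t i j : ℝ) * (α i * α j)
            = (((cnt x (α i) (α j) ℓ : ℝ) + (cnt x (α i) (α j) (-ℓ) : ℝ)) * (α i * α j))
              - (((cnt x' (α i) (α j) ℓ : ℝ) + (cnt x' (α i) (α j) (-ℓ) : ℝ)) * (α i * α j)) := by
          intro i j
          simp only [ht]
          push_cast
          ring
        simp_rw [hrw]
        simp only [Finset.sum_sub_distrib]
        rw [expand x hx, expand x' hx', h, sub_self]
      have hzero := lin_key α hgen t hsym hsum
      intro i j
      have h0 := hzero i j
      simp only [ht, sub_eq_zero] at h0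
      exact_mod_cast h0
    intro i j
    show diffMS (levelSet x (α i)) (levelSet x (α j))
        = diffMS (levelSet x' (α i)) (levelSet x' (α j))
    refine Multiset.ext.mpr fun d => ?_
    rw [count_diffMS, count_diffMS]
    apply Nat.eq_of_mul_eq_mul_left (show 0 < 2 by norm_num)
    rw [double_fiber, double_fiber]
    refine Finset.sum_congr rfl fun m _ => ?_
    split_ifs with hmd
    · exact hS m i j
    · rfl
  · intro h
    funext ℓ
    have hS : ∀ i j : Fin K,
        cnt x (α i) (α j) ℓ + cnt x (α i) (α j) (-ℓ)
          = cnt x' (α i) (α j) ℓ + cnt x' (α i) (α j) (-ℓ) := by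
      intro i j
      have hc : diffMS (levelSet x (α i)) (levelSet x (α j))
          = diffMS (levelSet x' (α i)) (levelSet x' (α j)) := h i j
      have h1 : (diffMS (levelSet x (α i)) (levelSet x (α j))).count (mdist ℓ)
          = (diffMS (levelSet x' (α i)) (levelSet x' (α j))).count (mdist ℓ) := by rw [hc]
      rw [count_diffMS, count_diffMS, T_eq, T_eq] at h1
      by_cases hl : ℓ = -ℓ
      · simp only [if_pos hl] at h1
        rw [← hl, h1]
      · simp only [if_neg hl] at h1
        exact h1
    have key : autocorr x ℓ + autocorr x (-ℓ) = autocorr x' ℓ + autocorr x' (-ℓ) := by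
      rw [autocorr_eq α hdist x hx ℓ, autocorr_eq α hdist x hx (-ℓ),
        autocorr_eq α hdist x' hx' ℓ, autocorr_eq α hdist x' hx' (-ℓ),
        ← Finset.sum_add_distrib, ← Finset.sum_add_distrib]
      refine Finset.sum_congr rfl fun i _ => ?_
      rw [← Finset.sum_add_distrib, ← Finset.sum_add_distrib]
      refine Finset.sum_congr rfl fun j _ => ?_
      have hcast : ((cnt x (α i) (α j) ℓ : ℝ) + (cnt x (α i) (α j) (-ℓ) : ℝ))
          = ((cnt x' (α i) (α j) ℓ : ℝ) + (cnt x' (α i) (α j) (-ℓ) : ℝ)) := by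
        exact_mod_cast congrArg (Nat.cast (R := ℝ)) (hS i j)
      rw [← add_mul, ← add_mul, hcast]
    rw [autocorr_neg, autocorr_neg] at key
    linarith
end

section
/- Let N ≥ 1, K ≥ 2, and let (A_1, …, A_K) and (A'_1, …, A'_K) be ordered partitions of [0,N-1]. If A_i − A_j = A'_i − A'_j as multisets for all pairs i, j with 2 ≤ i, j ≤ K, then A_1 − A_1 = A'_1 − A'_1 as multisets. -/
section MyAux
section Aux
variable {N : ℕ}

lemma cdist_comm (i j : ZMod N) : cdist i j = cdist j i := min_comm _ _

lemma cdist_self (i : ZMod N) : cdist i i = 0 := by simp [cdist]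

lemma cdist_sub_zero (i j : ZMod N) : cdist i j = cdist (i - j) 0 := by
  simp [cdist]

lemma diffMS_eq_bind (A B : Finset (ZMod N)) :
    diffMS A B = A.val.bind fun a => B.val.map (cdist a) := by
  unfold diffMS
  rw [Finset.product_val]
  show Multiset.map _ (Multiset.product _ _) = _
  rw [Multiset.product, Multiset.map_bind]
  exact Multiset.bind_congr fun a _ => by rw [Multiset.map_map]; rfl

lemma diffMS_comm (A B : Finset (ZMod N)) : diffMS A B = diffMS B A := by
  rw [diffMS_eq_bind, diffMS_eq_bind, Multiset.bind_map_comm]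
  exact Multiset.bind_congr fun a _ =>
    Multiset.map_congr rfl fun b _ => (cdist_comm a b).symm

/-- the universal distance multiset -/
def uD (N : ℕ) [NeZero N] : Multiset ℕ :=
  (Finset.univ : Finset (ZMod N)).val.map (cdist · 0)

lemma map_cdist_univ [NeZero N] (a : ZMod N) :
    (Finset.univ : Finset (ZMod N)).val.map (cdist a) = uD N := by
  have h1 : (Finset.univ : Finset (ZMod N)).val.map (cdist a)
      = ((Finset.univ : Finset (ZMod N)).val.map (Equiv.subLeft a)).map (cdist · 0) := by
    rw [Multiset.map_map]
    exact Multiset.map_congr rfl fun b _ => cdist_sub_zero a b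
  have h2 : (Finset.univ : Finset (ZMod N)).val.map (Equiv.subLeft a)
      = (Finset.univ : Finset (ZMod N)).val :=
    congrArg Finset.val (Finset.map_univ_equiv (Equiv.subLeft a))
  rw [h1, h2, uD]

lemma diffMS_univ_right [NeZero N] (A : Finset (ZMod N)) :
    diffMS A Finset.univ = A.card • uD N := by
  rw [diffMS_eq_bind,
    Multiset.bind_congr (g := fun _ => uD N) (fun a _ => map_cdist_univ a),
    Multiset.bind, Multiset.map_const', Multiset.join, Multiset.sum_replicate, Finset.card]

lemma diffMS_univ_left [NeZero N] (B : Finset (ZMod N)) :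
    diffMS Finset.univ B = B.card • uD N := by
  rw [diffMS_comm, diffMS_univ_right]

lemma card_diffMS (A B : Finset (ZMod N)) :
    Multiset.card (diffMS A B) = A.card * B.card := by
  rw [diffMS, Multiset.card_map, ← Finset.card_def, Finset.card_product]

end Aux

section Aux2
variable {N : ℕ}

lemma partition_val {K : ℕ} [NeZero N] (A : Fin K → Finset (ZMod N)) (hA : IsPartitionOf A) :
    (Finset.univ : Finset (ZMod N)).val = ∑ i : Fin K, (A i).val := by
  classical
  have hd : ((Finset.univ : Finset (Fin K)) : Set (Fin K)).PairwiseDisjoint A := fun i _ j _ hij => hA.1 i j hij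
  have he : Finset.univ.disjiUnion A hd = Finset.univ := by
    rw [Finset.disjiUnion_eq_biUnion]; exact hA.2
  calc (Finset.univ : Finset (ZMod N)).val = (Finset.univ.disjiUnion A hd).val := by rw [he]
    _ = Finset.univ.val.bind fun i => (A i).val := Finset.disjiUnion_val _ _ _
    _ = ∑ i : Fin K, (A i).val := by
        simp [Multiset.bind, Multiset.join, Finset.sum]

lemma bind_finset_sum {ι α β : Type*} (s : Finset ι) (m : ι → Multiset α) (f : α → Multiset β) :
    (∑ i ∈ s, m i).bind f = ∑ i ∈ s, (m i).bind f := by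
  classical
  induction s using Finset.cons_induction with
  | empty => simp
  | cons a t ha ih => rw [Finset.sum_cons, Finset.sum_cons, Multiset.add_bind, ih]

lemma diffMS_univ_sum_left {K : ℕ} [NeZero N] (A : Fin K → Finset (ZMod N))
    (hA : IsPartitionOf A) (C : Finset (ZMod N)) :
    diffMS Finset.univ C = ∑ i : Fin K, diffMS (A i) C := by
  rw [diffMS_eq_bind, partition_val A hA, bind_finset_sum]
  exact Finset.sum_congr rfl fun i _ => (diffMS_eq_bind _ _).symm

lemma product_map_swap {α β : Type*} (m : Multiset α) (n : Multiset β) :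
    (m ×ˢ n).map Prod.swap = n ×ˢ m := by
  show (Multiset.product m n).map Prod.swap = Multiset.product n m
  rw [Multiset.product, Multiset.map_bind, Multiset.product, Multiset.bind_map_comm]
  exact Multiset.bind_congr fun a _ => by rw [Multiset.map_map]; rfl

lemma two_selfDiff [NeZero N] (A : Finset (ZMod N)) :
    selfDiffMS A + selfDiffMS A = diffMS A A + Multiset.replicate A.card 0 := by
  classical
  set s : Multiset (ZMod N × ZMod N) := (A ×ˢ A).val with hs
  set f : ZMod N × ZMod N → ℕ := fun p => cdist p.1 p.2 with hf
  have hself : selfDiffMS A = (s.filter fun p => p.1.val ≤ p.2.val).map f := by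
    rw [selfDiffMS, Finset.filter_val]
  have hdiff : diffMS A A = s.map f := rfl
  have hswap : s.map Prod.swap = s := by rw [hs, Finset.product_val, product_map_swap]
  -- the strict part and the diagonal
  have hPsplit : s.filter (fun p => p.1.val ≤ p.2.val)
      = s.filter (fun p => p.1.val < p.2.val) + s.filter (fun p => p.1 = p.2) := by
    rw [Multiset.filter_add_filter]
    have h1 : Multiset.filter (fun p => p.1.val < p.2.val ∨ p.1 = p.2) s
        = Multiset.filter (fun p => p.1.val ≤ p.2.val) s := by
      apply Multiset.filter_congr
      intro p _
      constructor
      · rintro (h | h)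
        · exact le_of_lt h
        · rw [h]
      · intro h
        rcases lt_or_eq_of_le h with h' | h'
        · exact Or.inl h'
        · exact Or.inr (ZMod.val_injective N h')
    have h2 : Multiset.filter (fun p => p.1.val < p.2.val ∧ p.1 = p.2) s = 0 := by
      rw [Multiset.filter_eq_nil]
      rintro p _ ⟨h1', h2'⟩
      rw [h2'] at h1'; exact lt_irrefl _ h1'
    rw [h1, h2, add_zero]
  have hnot : (s.filter fun p => ¬ p.1.val ≤ p.2.val).map f
      = (s.filter fun p => p.1.val < p.2.val).map f := by
    conv_lhs => rw [← hswap]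
    rw [Multiset.filter_map, Multiset.map_map]
    have : Multiset.filter ((fun p : ZMod N × ZMod N => ¬ p.1.val ≤ p.2.val) ∘ Prod.swap) s
        = Multiset.filter (fun p => p.1.val < p.2.val) s := by
      apply Multiset.filter_congr
      intro p _
      exact Nat.not_le
    rw [this]
    exact Multiset.map_congr rfl fun p _ => cdist_comm p.2 p.1
  have hdiag : (s.filter fun p => p.1 = p.2).map f = Multiset.replicate A.card 0 := by
    rw [Multiset.eq_replicate]
    constructor
    · rw [Multiset.card_map]
      have : Multiset.filter (fun p : ZMod N × ZMod N => p.1 = p.2) s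
          = ((A ×ˢ A).filter fun p => p.1 = p.2).val := by rw [Finset.filter_val]
      rw [this, ← Finset.card_def]
      have himg : (A ×ˢ A).filter (fun p => p.1 = p.2) = A.image (fun a => (a, a)) := by
        ext p
        simp only [Finset.mem_filter, Finset.mem_product, Finset.mem_image]
        constructor
        · rintro ⟨⟨h1, _⟩, h3⟩
          exact ⟨p.1, h1, Prod.ext rfl h3⟩
        · rintro ⟨a, ha, rfl⟩
          exact ⟨⟨ha, ha⟩, rfl⟩
      rw [himg, Finset.card_image_of_injective _ (fun a b hab => congrArg Prod.fst hab)]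
    · intro b hb
      rw [Multiset.mem_map] at hb
      obtain ⟨p, hp, rfl⟩ := hb
      have := Multiset.of_mem_filter hp
      rw [hf]
      simp only
      rw [this, cdist_self]
  -- assemble
  have hsplit2 : s.map f = (s.filter fun p => p.1.val ≤ p.2.val).map f
      + (s.filter fun p => ¬ p.1.val ≤ p.2.val).map f := by
    conv_lhs => rw [← Multiset.filter_add_not (fun p : ZMod N × ZMod N => p.1.val ≤ p.2.val) s]
    rw [Multiset.map_add]
  rw [hself, hdiff, hsplit2, hnot, hPsplit, Multiset.map_add, hdiag]
  abel

end Aux2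

end MyAux

/-- if all difference multisets away from the first part agree,
then the first parts are homometric. -/
theorem first_parts_homometric (N K : ℕ) [NeZero N] [NeZero K] (hK : 2 ≤ K)
    (A A' : Fin K → Finset (ZMod N)) (hA : IsPartitionOf A) (hA' : IsPartitionOf A')
    (h : ∀ i j : Fin K, i ≠ 0 → j ≠ 0 → diffMS (A i) (A j) = diffMS (A' i) (A' j)) :
    selfDiffMS (A 0) = selfDiffMS (A' 0) := by
  classical
  set S : Finset (Fin K) := Finset.univ.erase 0 with hS
  have hcard : ∀ i : Fin K, i ≠ 0 → (A i).card = (A' i).card := by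
    intro i hi
    have hc := congrArg Multiset.card (h i i hi hi)
    rw [card_diffMS, card_diffMS] at hc
    exact Nat.mul_self_inj.mp hc
  have hcol : ∀ C : Finset (ZMod N),
      diffMS Finset.univ C = diffMS (A 0) C + ∑ i ∈ S, diffMS (A i) C := by
    intro C
    rw [diffMS_univ_sum_left A hA C]
    exact (Finset.add_sum_erase _ _ (Finset.mem_univ 0)).symm
  have hcol' : ∀ C : Finset (ZMod N),
      diffMS Finset.univ C = diffMS (A' 0) C + ∑ i ∈ S, diffMS (A' i) C := by
    intro C
    rw [diffMS_univ_sum_left A' hA' C]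
    exact (Finset.add_sum_erase _ _ (Finset.mem_univ 0)).symm
  have hB : ∀ j : Fin K, j ≠ 0 → diffMS (A 0) (A j) = diffMS (A' 0) (A' j) := by
    intro j hj
    have e1 := hcol (A j)
    have e2 := hcol' (A' j)
    rw [diffMS_univ_left] at e1 e2
    have hsum : ∑ i ∈ S, diffMS (A i) (A j) = ∑ i ∈ S, diffMS (A' i) (A' j) :=
      Finset.sum_congr rfl fun i hi => h i j (Finset.ne_of_mem_erase hi) hj
    have e3 : diffMS (A 0) (A j) + ∑ i ∈ S, diffMS (A' i) (A' j)
        = diffMS (A' 0) (A' j) + ∑ i ∈ S, diffMS (A' i) (A' j) := by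
      rw [← hsum, ← e1, hcard j hj, e2, hsum]
    exact add_right_cancel e3
  have hB' : ∀ j : Fin K, j ≠ 0 → diffMS (A j) (A 0) = diffMS (A' j) (A' 0) := by
    intro j hj
    rw [diffMS_comm (A j), diffMS_comm (A' j)]
    exact hB j hj
  -- total decomposition
  have u1 : diffMS (Finset.univ : Finset (ZMod N)) Finset.univ
      = diffMS (A 0) (A 0) + (∑ j ∈ S, diffMS (A j) (A 0)
        + ∑ i ∈ S, (diffMS (A 0) (A i) + ∑ j ∈ S, diffMS (A j) (A i))) := by
    rw [hcol Finset.univ, diffMS_comm (A 0) Finset.univ, hcol (A 0)]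
    have e : ∑ i ∈ S, diffMS (A i) Finset.univ
        = ∑ i ∈ S, (diffMS (A 0) (A i) + ∑ j ∈ S, diffMS (A j) (A i)) :=
      Finset.sum_congr rfl fun i _ => by rw [diffMS_comm, hcol (A i)]
    rw [e, add_assoc]
  have u1' : diffMS (Finset.univ : Finset (ZMod N)) Finset.univ
      = diffMS (A' 0) (A' 0) + (∑ j ∈ S, diffMS (A' j) (A' 0)
        + ∑ i ∈ S, (diffMS (A' 0) (A' i) + ∑ j ∈ S, diffMS (A' j) (A' i))) := by
    rw [hcol' Finset.univ, diffMS_comm (A' 0) Finset.univ, hcol' (A' 0)]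
    have e : ∑ i ∈ S, diffMS (A' i) Finset.univ
        = ∑ i ∈ S, (diffMS (A' 0) (A' i) + ∑ j ∈ S, diffMS (A' j) (A' i)) :=
      Finset.sum_congr rfl fun i _ => by rw [diffMS_comm, hcol' (A' i)]
    rw [e, add_assoc]
  have s1 : ∑ j ∈ S, diffMS (A j) (A 0) = ∑ j ∈ S, diffMS (A' j) (A' 0) :=
    Finset.sum_congr rfl fun j hj => hB' j (Finset.ne_of_mem_erase hj)
  have s2 : ∑ i ∈ S, (diffMS (A 0) (A i) + ∑ j ∈ S, diffMS (A j) (A i))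
      = ∑ i ∈ S, (diffMS (A' 0) (A' i) + ∑ j ∈ S, diffMS (A' j) (A' i)) := by
    refine Finset.sum_congr rfl fun i hi => ?_
    have hi' := Finset.ne_of_mem_erase hi
    rw [hB i hi']
    congr 1
    exact Finset.sum_congr rfl fun j hj => h j i (Finset.ne_of_mem_erase hj) hi'
  have htot : diffMS (A 0) (A 0) = diffMS (A' 0) (A' 0) := by
    have e : diffMS (A 0) (A 0) + (∑ j ∈ S, diffMS (A' j) (A' 0)
          + ∑ i ∈ S, (diffMS (A' 0) (A' i) + ∑ j ∈ S, diffMS (A' j) (A' i)))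
        = diffMS (A' 0) (A' 0) + (∑ j ∈ S, diffMS (A' j) (A' 0)
          + ∑ i ∈ S, (diffMS (A' 0) (A' i) + ∑ j ∈ S, diffMS (A' j) (A' i))) := by
      rw [← s1, ← s2, ← u1, u1', s1, s2]
    exact add_right_cancel e
  have hc0 : (A 0).card = (A' 0).card := by
    have hc := congrArg Multiset.card htot
    rw [card_diffMS, card_diffMS] at hc
    exact Nat.mul_self_inj.mp hc
  have hfin : selfDiffMS (A 0) + selfDiffMS (A 0) = selfDiffMS (A' 0) + selfDiffMS (A' 0) := by
    rw [two_selfDiff, two_selfDiff, htot, hc0]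
  rw [Multiset.ext]
  intro a
  have := congrArg (Multiset.count a) hfin
  rw [Multiset.count_add, Multiset.count_add] at this
  omega
end
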